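/- Let a, b, c, d be purely imaginary quaternions with b ≠ a, c ≠ b, d ≠ c, d ≠ a and b ≠ d, and let α, β ∈ ℝ with β ≠ 0. If the quaternionic cross-ratio satisfies q(a,b,c,d) = α/β (a real scalar), then α (b−a)/‖b−a‖² + β (c−b)/‖c−b‖² = (α − β)(b−d)/‖b−d‖². -/

import Mathlib

/-- The quaternionic cross-ratio `q(a,b,c,d) = (a−b)(b−c)⁻¹(c−d)(d−a)⁻¹`. -/
noncomputable def qcr (a b c d : Quaternion ℝ) : Quaternion ℝ :=
  (a - b) * (b - c)⁻¹ * (c - d) * (d - a)⁻¹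

/-- For a nonzero purely imaginary quaternion, the inverse is `-(‖x‖²)⁻¹ • x`. -/
lemma im_inv_eq (x : Quaternion ℝ) (hx : x.re = 0) (h0 : x ≠ 0) :
    x⁻¹ = (-(‖x‖ ^ 2)⁻¹) • x := by
  have hstar : star x = -x := Quaternion.star_eq_neg.2 hx
  have hns : (Quaternion.normSq x : ℝ) = ‖x‖ ^ 2 := by
    rw [Quaternion.normSq_eq_norm_mul_self, sq]
  rw [Quaternion.inv_def, hstar, hns, smul_neg, neg_smul]

/-- Hence `(r / ‖x‖²) • x = (-r) • x⁻¹`. -/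
lemma smul_im_inv (x : Quaternion ℝ) (hx : x.re = 0) (h0 : x ≠ 0) (r : ℝ) :
    (r / ‖x‖ ^ 2) • x = (-r) • x⁻¹ := by
  rw [im_inv_eq x hx h0, smul_smul]
  congr 1
  field_simp

theorem stmt_10 (a b c d : Quaternion ℝ)
    (ha : a.re = 0) (hb : b.re = 0) (hc : c.re = 0) (hd : d.re = 0)
    (hba : b ≠ a) (hcb : c ≠ b) (hdc : d ≠ c) (hda : d ≠ a) (hbd : b ≠ d)
    (α β : ℝ) (hβ : β ≠ 0)
    (hq : qcr a b c d = ((α / β : ℝ) : Quaternion ℝ)) :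
    (α / ‖b - a‖ ^ 2) • (b - a) + (β / ‖c - b‖ ^ 2) • (c - b) =
      ((α - β) / ‖b - d‖ ^ 2) • (b - d) := by
  have hu : b - a ≠ 0 := sub_ne_zero.2 hba
  have hv : c - b ≠ 0 := sub_ne_zero.2 hcb
  have hw : b - d ≠ 0 := sub_ne_zero.2 hbd
  have hda' : d - a ≠ 0 := sub_ne_zero.2 hda
  have hure : (b - a).re = 0 := by simp [Quaternion.re_sub, ha, hb]
  have hvre : (c - b).re = 0 := by simp [Quaternion.re_sub, hb, hc]
  have hwre : (b - d).re = 0 := by simp [Quaternion.re_sub, hb, hd]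
  rw [smul_im_inv _ hure hu, smul_im_inv _ hvre hv, smul_im_inv _ hwre hw]
  set u := b - a with hu_def
  set v := c - b with hv_def
  set w := b - d with hw_def
  -- The key relation extracted from the cross-ratio hypothesis.
  have key : u * v⁻¹ * w = ((α / β) • u - (α / β) • w) - u := by
    have h1 : (a - b) * (b - c)⁻¹ * (c - d) = ((α / β : ℝ) : Quaternion ℝ) * (d - a) := by
      have := hq
      unfold qcr at this
      calc (a - b) * (b - c)⁻¹ * (c - d)
          = (a - b) * (b - c)⁻¹ * (c - d) * (d - a)⁻¹ * (d - a) := by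
            rw [inv_mul_cancel_right₀ hda']
        _ = ((α / β : ℝ) : Quaternion ℝ) * (d - a) := by rw [this]
    have hab : a - b = -u := by rw [hu_def]; abel
    have hbc : b - c = -v := by rw [hv_def]; abel
    have hcd : c - d = v + w := by rw [hv_def, hw_def]; abel
    have hdav : d - a = u - w := by rw [hu_def, hw_def]; abel
    rw [hab, hbc, hcd, hdav, inv_neg] at h1
    simp only [mul_neg, neg_mul, neg_neg, Quaternion.coe_mul_eq_smul] at h1
    have h2 : u * v⁻¹ * (v + w) = (α / β) • (u - w) := h1
    rw [mul_add, mul_assoc u v⁻¹ v, inv_mul_cancel₀ hv, mul_one, smul_sub] at h2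
    linear_combination (norm := module) h2
  -- Multiply the goal on the left by `u` and on the right by `w`.
  have main : u * ((-α) • u⁻¹ + (-β) • v⁻¹) * w = u * ((-(α - β)) • w⁻¹) * w := by
    have hβsm : (β : ℝ) • ((α / β) • u - (α / β) • w - u) = α • u - α • w - β • u := by
      rw [smul_sub, smul_sub, smul_smul, smul_smul]
      field_simp
    calc u * ((-α) • u⁻¹ + (-β) • v⁻¹) * w
        = (-α) • (u * u⁻¹ * w) + (-β) • (u * v⁻¹ * w) := by
          rw [mul_add]; rw [add_mul]
          simp [Algebra.mul_smul_comm, Algebra.smul_mul_assoc]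
      _ = (-α) • w + (-β) • ((α / β) • u - (α / β) • w - u) := by
          rw [mul_inv_cancel₀ hu, one_mul, key]
      _ = (-α) • w - (α • u - α • w - β • u) := by
          rw [neg_smul β, neg_smul, ← hβsm]; module
      _ = (-(α - β)) • u := by module
      _ = (-(α - β)) • (u * w⁻¹ * w) := by rw [inv_mul_cancel_right₀ hw]
      _ = u * ((-(α - β)) • w⁻¹) * w := by
          simp [Algebra.mul_smul_comm, Algebra.smul_mul_assoc]
  have := mul_right_cancel₀ hw main
  exact mul_left_cancel₀ hu this
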